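/- arXiv:2111.14222 — 3 statements merged into one kernel-verified Lean document; each statement's English description precedes it below -/
import Mathlib

section
/- Let H be a complex Hilbert space, let A be a Hilbert–Schmidt operator on H, and let 0 ≤ ν ≤ 1. Then w_{(2,ν)}(A)² = (2ν² - 2ν + 1) ‖A‖₂² + 2ν(1-ν) |tr(A²)|, where tr denotes the trace (A² is trace class since A is Hilbert–Schmidt). -/
local notation "⟪" x ", " y "⟫" => @inner ℂ _ _ x y


variable {H : Type*} [NormedAddCommGroup H] [InnerProductSpace ℂ H] [CompleteSpace H]

/-- The operator `ν e^{iθ} A + (1-ν) e^{-iθ} A*`. -/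
noncomputable def weightedPart {E : Type*} [NormedAddCommGroup E] [InnerProductSpace ℂ E]
    [CompleteSpace E] (ν θ : ℝ) (A : E →L[ℂ] E) : E →L[ℂ] E :=
  ((ν : ℂ) * Complex.exp (θ * Complex.I)) • A +
    (((1 - ν : ℝ) : ℂ) * Complex.exp (-(θ * Complex.I))) • ContinuousLinearMap.adjoint A

/-- The Hilbert–Schmidt norm `‖A‖₂ = √(∑ᵢ ‖A eᵢ‖²)` computed w.r.t. a Hilbert basis `e`. -/
noncomputable def hsNorm {E : Type*} [NormedAddCommGroup E] [InnerProductSpace ℂ E]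
    {ι : Type*} (e : HilbertBasis ι ℂ E) (A : E →L[ℂ] E) : ℝ :=
  Real.sqrt (∑' i, ‖A (e i)‖ ^ 2)

/-- The trace `tr(T) = ∑ᵢ ⟨eᵢ, T eᵢ⟩` computed w.r.t. a Hilbert basis `e`. -/
noncomputable def trBasis {E : Type*} [NormedAddCommGroup E] [InnerProductSpace ℂ E]
    {ι : Type*} (e : HilbertBasis ι ℂ E) (T : E →L[ℂ] E) : ℂ :=
  ∑' i, (inner ℂ (e i) (T (e i)) : ℂ)

/-- The weighted Hilbert–Schmidt numerical radius
`w_{(2,ν)}(A) = sup_{θ ∈ ℝ} ‖ν e^{iθ} A + (1-ν) e^{-iθ} A*‖₂`. -/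
noncomputable def wHS {E : Type*} [NormedAddCommGroup E] [InnerProductSpace ℂ E]
    [CompleteSpace E] {ι : Type*} (e : HilbertBasis ι ℂ E) (ν : ℝ) (A : E →L[ℂ] E) : ℝ :=
  ⨆ θ : ℝ, hsNorm e (weightedPart ν θ A)

/-- The block operator `[[X, Y],[Z, W]]` on the Hilbert space direct sum `H ⊕₂ H`,
mapping `(x, y)` to `(Xx + Yy, Zx + Wy)`. -/
noncomputable def blockOp (X Y Z W : H →L[ℂ] H) :
    WithLp 2 (H × H) →L[ℂ] WithLp 2 (H × H) :=
  ((WithLp.prodContinuousLinearEquiv 2 ℂ H H).symm.toContinuousLinearMap).comp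
    ((((X.comp (ContinuousLinearMap.fst ℂ H H)) + (Y.comp (ContinuousLinearMap.snd ℂ H H))).prod
      ((Z.comp (ContinuousLinearMap.fst ℂ H H)) + (W.comp (ContinuousLinearMap.snd ℂ H H)))).comp
      (WithLp.prodContinuousLinearEquiv 2 ℂ H H).toContinuousLinearMap)


open Complex ContinuousLinearMap in
private lemma parseval_hasSum' {E : Type*} [NormedAddCommGroup E] [InnerProductSpace ℂ E]
    {ι : Type*} (e : HilbertBasis ι ℂ E) (x : E) :
    HasSum (fun i => ‖(inner ℂ (e i) x : ℂ)‖ ^ 2) (‖x‖ ^ 2) := by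
  have h := (e.hasSum_inner_mul_inner x x).mapL Complex.reCLM
  have h1 : ∀ i : ι, ((inner ℂ x (e i) : ℂ) * (inner ℂ (e i) x : ℂ)).re
      = ‖(inner ℂ (e i) x : ℂ)‖ ^ 2 := by
    intro i
    rw [show (inner ℂ x (e i) : ℂ) = starRingEnd ℂ (inner ℂ (e i) x : ℂ) from
      (inner_conj_symm _ _).symm, mul_comm, Complex.mul_conj]
    simp [Complex.normSq_eq_norm_sq]
    norm_cast
  have h2 : ((inner ℂ x x : ℂ)).re = ‖x‖ ^ 2 := by
    rw [inner_self_eq_norm_sq_to_K (𝕜 := ℂ)]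
    norm_cast
  simpa only [Complex.reCLM_apply, h1, h2] using h

open Complex ContinuousLinearMap in
private lemma adjoint_hasSum' {E : Type*} [NormedAddCommGroup E] [InnerProductSpace ℂ E]
    [CompleteSpace E] {ι : Type*} (e : HilbertBasis ι ℂ E) (A : E →L[ℂ] E)
    (hA : Summable fun i => ‖A (e i)‖ ^ 2) :
    HasSum (fun i => ‖(ContinuousLinearMap.adjoint A) (e i)‖ ^ 2) (∑' i, ‖A (e i)‖ ^ 2) := by
  have hslice : ∀ i, HasSum (fun j => ‖(inner ℂ (e j) (A (e i)) : ℂ)‖ ^ 2) (‖A (e i)‖ ^ 2) :=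
    fun i => parseval_hasSum' e _
  have hFs : Summable (fun p : ι × ι => ‖(inner ℂ (e p.2) (A (e p.1)) : ℂ)‖ ^ 2) :=
    (summable_prod_of_nonneg (fun p => by positivity)).2
      ⟨fun i => (hslice i).summable, hA.congr fun i => ((hslice i).tsum_eq).symm⟩
  have hGs : Summable (fun p : ι × ι => ‖(inner ℂ (e p.1) (A (e p.2)) : ℂ)‖ ^ 2) := by
    have := (Equiv.prodComm ι ι).summable_iff.mpr hFs
    exact this.congr fun p => rfl
  have hmarg : Summable fun i => ∑' j, ‖(inner ℂ (e i) (A (e j)) : ℂ)‖ ^ 2 :=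
    ((summable_prod_of_nonneg (fun p => by positivity)).1 hGs).2
  have hBnorm : ∀ i, ‖(ContinuousLinearMap.adjoint A) (e i)‖ ^ 2
      = ∑' j, ‖(inner ℂ (e i) (A (e j)) : ℂ)‖ ^ 2 := by
    intro i
    have hp := parseval_hasSum' e ((ContinuousLinearMap.adjoint A) (e i))
    rw [← hp.tsum_eq]
    refine tsum_congr fun j => ?_
    rw [ContinuousLinearMap.adjoint_inner_right, norm_inner_symm (A (e j)) (e i)]
  have hsum : Summable fun i => ‖(ContinuousLinearMap.adjoint A) (e i)‖ ^ 2 :=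
    hmarg.congr fun i => (hBnorm i).symm
  have htsum : ∑' i, ‖(ContinuousLinearMap.adjoint A) (e i)‖ ^ 2 = ∑' i, ‖A (e i)‖ ^ 2 := by
    calc ∑' i, ‖(ContinuousLinearMap.adjoint A) (e i)‖ ^ 2
        = ∑' i, ∑' j, ‖(inner ℂ (e i) (A (e j)) : ℂ)‖ ^ 2 := tsum_congr hBnorm
      _ = ∑' j, ∑' i, ‖(inner ℂ (e i) (A (e j)) : ℂ)‖ ^ 2 :=
          Summable.tsum_comm (f := fun b c => ‖(inner ℂ (e c) (A (e b)) : ℂ)‖ ^ 2) hFs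
      _ = ∑' j, ‖A (e j)‖ ^ 2 := tsum_congr fun j => (hslice j).tsum_eq
  have h := hsum.hasSum
  rwa [htsum] at h

theorem stmt10 {ι : Type*} (e : HilbertBasis ι ℂ H) (A : H →L[ℂ] H)
    (hA : Summable fun i => ‖A (e i)‖ ^ 2)
    (ν : ℝ) (hν₀ : 0 ≤ ν) (hν₁ : ν ≤ 1) :
    (wHS e ν A) ^ 2 =
      (2 * ν ^ 2 - 2 * ν + 1) * (hsNorm e A) ^ 2 +
        2 * ν * (1 - ν) * ‖trBasis e (A.comp A)‖ := by
  have hS0 : (0:ℝ) ≤ ∑' i, ‖A (e i)‖ ^ 2 := tsum_nonneg fun i => by positivity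
  have hAS : HasSum (fun i => ‖A (e i)‖ ^ 2) (∑' i, ‖A (e i)‖ ^ 2) := hA.hasSum
  have hBS : HasSum (fun i => ‖(ContinuousLinearMap.adjoint A) (e i)‖ ^ 2)
      (∑' i, ‖A (e i)‖ ^ 2) := adjoint_hasSum' e A hA
  have hcin : ∀ i : ι, (⟪e i, A (A (e i))⟫ : ℂ)
      = ⟪(ContinuousLinearMap.adjoint A) (e i), A (e i)⟫ :=
    fun i => (ContinuousLinearMap.adjoint_inner_left A (A (e i)) (e i)).symm
  have hcbound : ∀ i : ι, ‖(⟪e i, A (A (e i))⟫ : ℂ)‖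
      ≤ (‖A (e i)‖ ^ 2 + ‖(ContinuousLinearMap.adjoint A) (e i)‖ ^ 2) / 2 := by
    intro i
    rw [hcin i]
    calc ‖(⟪(ContinuousLinearMap.adjoint A) (e i), A (e i)⟫ : ℂ)‖
        ≤ ‖(ContinuousLinearMap.adjoint A) (e i)‖ * ‖A (e i)‖ := norm_inner_le_norm _ _
      _ ≤ _ := by nlinarith [sq_nonneg (‖A (e i)‖ - ‖(ContinuousLinearMap.adjoint A) (e i)‖)]
  have hcs : Summable fun i : ι => (⟪e i, A (A (e i))⟫ : ℂ) :=
    Summable.of_norm_bounded ((hAS.summable.add hBS.summable).div_const 2) hcbound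
  have ht : HasSum (fun i : ι => (⟪e i, A (A (e i))⟫ : ℂ)) (trBasis e (A.comp A)) := by
    have h : trBasis e (A.comp A) = ∑' i, (⟪e i, A (A (e i))⟫ : ℂ) := tsum_congr fun i => rfl
    rw [h]
    exact hcs.hasSum
  have key : ∀ θ : ℝ, hsNorm e (weightedPart ν θ A) =
      Real.sqrt ((2*ν^2 - 2*ν + 1) * (∑' i, ‖A (e i)‖ ^ 2)
        + 2*ν*(1-ν) * (Complex.exp (2*θ*Complex.I) * trBasis e (A.comp A)).re) := by
    intro θ
    have hnα : ‖(ν:ℂ) * Complex.exp (θ * Complex.I)‖ = ν := by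
      simp [Complex.norm_exp, _root_.abs_of_nonneg hν₀]
    have hnβ : ‖((1-ν:ℝ):ℂ) * Complex.exp (-(θ * Complex.I))‖ = 1 - ν := by
      rw [norm_mul]
      simp only [Complex.norm_real, Real.norm_eq_abs, Complex.norm_exp]
      rw [_root_.abs_of_nonneg (show (0:ℝ) ≤ 1 - ν by linarith)]
      simp
    have hconjθ : starRingEnd ℂ ((θ:ℂ) * Complex.I) = -((θ:ℂ) * Complex.I) := by
      rw [map_mul, Complex.conj_ofReal, Complex.conj_I]
      ring
    have hconj2θ : starRingEnd ℂ (2*(θ:ℂ) * Complex.I) = -(2*(θ:ℂ) * Complex.I) := by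
      rw [map_mul, map_mul, Complex.conj_ofReal, Complex.conj_I, map_ofNat]
      ring
    have hterm : ∀ i : ι, ‖(weightedPart ν θ A) (e i)‖ ^ 2
        = ν^2 * ‖A (e i)‖^2 + ((1-ν)^2 * ‖(ContinuousLinearMap.adjoint A) (e i)‖^2
          + 2*ν*(1-ν) * (Complex.exp (2*θ*Complex.I) * ⟪e i, A (A (e i))⟫).re) := by
      intro i
      have hXapp : (weightedPart ν θ A) (e i)
          = ((ν:ℂ) * Complex.exp (θ * Complex.I)) • A (e i)
            + (((1-ν:ℝ):ℂ) * Complex.exp (-(θ * Complex.I)))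
                • (ContinuousLinearMap.adjoint A) (e i) := rfl
      rw [hXapp, norm_add_sq (𝕜 := ℂ), inner_smul_left, inner_smul_right,
        norm_smul, norm_smul, hnα, hnβ]
      have hin : (⟪A (e i), (ContinuousLinearMap.adjoint A) (e i)⟫ : ℂ)
          = starRingEnd ℂ (⟪e i, A (A (e i))⟫ : ℂ) := by
        rw [← inner_conj_symm, hcin i]
      rw [hin]
      have hc1 : starRingEnd ℂ ((ν:ℂ) * Complex.exp (θ * Complex.I))
            * (((1-ν:ℝ):ℂ) * Complex.exp (-(θ * Complex.I))
              * starRingEnd ℂ (⟪e i, A (A (e i))⟫ : ℂ))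
          = starRingEnd ℂ (((ν*(1-ν):ℝ):ℂ)
              * (Complex.exp (2*θ*Complex.I) * (⟪e i, A (A (e i))⟫ : ℂ))) := by
        simp only [map_mul, Complex.conj_conj, Complex.conj_ofReal, ← Complex.exp_conj,
          hconjθ, hconj2θ]
        rw [show -(2*(θ:ℂ) * Complex.I) = -((θ:ℂ)*Complex.I) + -((θ:ℂ)*Complex.I) by ring,
          Complex.exp_add]
        push_cast
        ring
      simp only [RCLike.re_to_complex]
      rw [hc1, Complex.conj_re, Complex.re_ofReal_mul]
      ring
    have h1 := hAS.mul_left (ν^2)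
    have h2 := hBS.mul_left ((1-ν)^2)
    have h3 := ((ht.mul_left (Complex.exp (2*θ*Complex.I))).mapL Complex.reCLM).mul_left (2*ν*(1-ν))
    have h := h1.add (h2.add h3)
    simp only [Complex.reCLM_apply] at h
    have hfun : (fun i : ι => ν^2 * ‖A (e i)‖^2
          + ((1-ν)^2 * ‖(ContinuousLinearMap.adjoint A) (e i)‖^2
          + 2*ν*(1-ν) * (Complex.exp (2*θ*Complex.I) * ⟪e i, A (A (e i))⟫).re))
        = fun i => ‖(weightedPart ν θ A) (e i)‖ ^ 2 := funext fun i => (hterm i).symm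
    rw [hfun] at h
    unfold hsNorm
    rw [h.tsum_eq]
    congr 1
    ring
  have habs : ∀ θ : ℝ, (Complex.exp (2*θ*Complex.I) * trBasis e (A.comp A)).re
      ≤ ‖trBasis e (A.comp A)‖ := by
    intro θ
    refine le_trans (Complex.re_le_norm _) ?_
    rw [norm_mul]
    simp [Complex.norm_exp]
  have h2ν : (0:ℝ) ≤ 2*ν*(1-ν) := by nlinarith
  have hb : ∀ θ : ℝ, hsNorm e (weightedPart ν θ A)
      ≤ Real.sqrt ((2*ν^2 - 2*ν + 1) * (∑' i, ‖A (e i)‖ ^ 2)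
        + 2*ν*(1-ν) * ‖trBasis e (A.comp A)‖) := by
    intro θ
    rw [key θ]
    apply Real.sqrt_le_sqrt
    nlinarith [habs θ, h2ν]
  have hM0 : (0:ℝ) ≤ (2*ν^2 - 2*ν + 1) * (∑' i, ‖A (e i)‖ ^ 2)
      + 2*ν*(1-ν) * ‖trBasis e (A.comp A)‖ := by
    have h := norm_nonneg (trBasis e (A.comp A))
    have hq : (0:ℝ) ≤ 2*ν^2 - 2*ν + 1 := by nlinarith [sq_nonneg (2*ν-1)]
    have h1 := mul_nonneg hq hS0
    have h2 := mul_nonneg h2ν h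
    linarith
  have hsup : wHS e ν A = Real.sqrt ((2*ν^2 - 2*ν + 1) * (∑' i, ‖A (e i)‖ ^ 2)
      + 2*ν*(1-ν) * ‖trBasis e (A.comp A)‖) := by
    refine le_antisymm (ciSup_le hb) ?_
    have hθ0 : hsNorm e (weightedPart ν (-(trBasis e (A.comp A)).arg/2) A)
        = Real.sqrt ((2*ν^2 - 2*ν + 1) * (∑' i, ‖A (e i)‖ ^ 2)
          + 2*ν*(1-ν) * ‖trBasis e (A.comp A)‖) := by
      rw [key]
      have harg : ∀ t : ℂ, Complex.exp (2*((-t.arg/2 : ℝ):ℂ)*Complex.I) * t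
          = (‖t‖ : ℂ) := by
        intro t
        have hexp : Complex.exp (2*((-t.arg/2 : ℝ):ℂ)*Complex.I)
            = Complex.exp (-(t.arg:ℂ)*Complex.I) := by
          congr 1
          push_cast
          ring
        rw [hexp]
        calc Complex.exp (-(t.arg:ℂ)*Complex.I) * t
            = Complex.exp (-(t.arg:ℂ)*Complex.I)
              * ((‖t‖ : ℂ) * Complex.exp ((t.arg:ℂ)*Complex.I)) := by
              congr 1
              exact (Complex.norm_mul_exp_arg_mul_I t).symm
          _ = (‖t‖ : ℂ) := by
              rw [mul_comm, mul_assoc, ← Complex.exp_add,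
                show ((t.arg:ℂ))*Complex.I + -(t.arg:ℂ)*Complex.I = 0 by ring,
                Complex.exp_zero, mul_one]
      rw [harg (trBasis e (A.comp A)), Complex.ofReal_re]
    rw [← hθ0]
    exact le_ciSup ⟨_, by rintro x ⟨θ, rfl⟩; exact hb θ⟩ (-(trBasis e (A.comp A)).arg/2)
  rw [hsup, Real.sq_sqrt hM0]
  unfold hsNorm
  rw [Real.sq_sqrt hS0]
end

section
/- Let H be a complex Hilbert space, let A be a Hilbert–Schmidt operator on H, and let 0 ≤ ν ≤ 1. Then √(2ν² - 2ν + 1) ‖A‖₂ ≤ w_{(2,ν)}(A) ≤ ‖A‖₂. -/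
variable {H : Type*} [NormedAddCommGroup H] [InnerProductSpace ℂ H] [CompleteSpace H]

open scoped NNReal ENNReal

section Helpers

set_option linter.unusedSectionVars false

variable {E : Type*} [NormedAddCommGroup E] {ι : Type*}

private lemma my_summable_iff_ne_top (v : ι → E) :
    Summable (fun i => ‖v i‖ ^ 2) ↔ (∑' i, (‖v i‖₊ : ℝ≥0∞) ^ 2) ≠ ⊤ := by
  have h1 : ∀ i, (‖v i‖₊ : ℝ≥0∞) ^ 2 = ((‖v i‖₊ ^ 2 : ℝ≥0) : ℝ≥0∞) := by
    intro i; push_cast; ring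
  rw [tsum_congr h1, ENNReal.tsum_coe_ne_top_iff_summable, ← NNReal.summable_coe]
  exact summable_congr fun i => by push_cast; ring

private lemma my_enn_sq (y : E) : (‖y‖₊ : ℝ≥0∞) ^ 2 = ENNReal.ofReal (‖y‖ ^ 2) := by
  rw [ENNReal.ofReal_pow (norm_nonneg _), ENNReal.ofReal]
  exact congrArg (fun t : ℝ≥0 => (t : ℝ≥0∞) ^ 2) (norm_toNNReal (a := y)).symm

private lemma my_tsum_sq_eq (v : ι → E) (hv : Summable fun i => ‖v i‖ ^ 2) :
    ∑' i, (‖v i‖₊ : ℝ≥0∞) ^ 2 = ENNReal.ofReal (∑' i, ‖v i‖ ^ 2) := by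
  rw [tsum_congr fun i => my_enn_sq (v i),
    ← ENNReal.ofReal_tsum_of_nonneg (fun i => sq_nonneg _) hv]

variable {H : Type*} [NormedAddCommGroup H] [InnerProductSpace ℂ H] [CompleteSpace H]

private lemma my_parseval (e : HilbertBasis ι ℂ H) (x : H) :
    Summable (fun j => ‖(inner ℂ (e j) x : ℂ)‖ ^ 2) ∧
      ∑' j, ‖(inner ℂ (e j) x : ℂ)‖ ^ 2 = ‖x‖ ^ 2 := by
  have hp : (0:ℝ) < (2 : ℝ≥0∞).toReal := by norm_num
  have hmem := lp.memℓp (e.repr x)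
  have hsumm := (memℓp_gen_iff hp).1 hmem
  have hconv : ∀ j, ‖(e.repr x) j‖ ^ (2 : ℝ≥0∞).toReal = ‖(inner ℂ (e j) x : ℂ)‖ ^ 2 := by
    intro j
    rw [e.repr_apply_apply]
    norm_num
  constructor
  · exact (summable_congr hconv).1 hsumm
  · have hn := lp.norm_rpow_eq_tsum hp (e.repr x)
    rw [tsum_congr hconv] at hn
    rw [← hn, LinearIsometryEquiv.norm_map]
    norm_num

private lemma my_parseval_enn (e : HilbertBasis ι ℂ H) (x : H) :
    ∑' j, (‖(inner ℂ (e j) x : ℂ)‖₊ : ℝ≥0∞) ^ 2 = (‖x‖₊ : ℝ≥0∞) ^ 2 := by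
  obtain ⟨hs, ht⟩ := my_parseval e x
  rw [my_tsum_sq_eq _ hs, ht, my_enn_sq]

private lemma my_double (e : HilbertBasis ι ℂ H) (B : H →L[ℂ] H) :
    ∑' i, (‖B (e i)‖₊ : ℝ≥0∞) ^ 2
      = ∑' i, ∑' j, (‖(inner ℂ (e j) (B (e i)) : ℂ)‖₊ : ℝ≥0∞) ^ 2 :=
  tsum_congr fun i => (my_parseval_enn e (B (e i))).symm

private lemma my_adjoint (e : HilbertBasis ι ℂ H) (A : H →L[ℂ] H)
    (hA : Summable fun i => ‖A (e i)‖ ^ 2) :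
    Summable (fun i => ‖(ContinuousLinearMap.adjoint A) (e i)‖ ^ 2) ∧
      ∑' i, ‖(ContinuousLinearMap.adjoint A) (e i)‖ ^ 2 = ∑' i, ‖A (e i)‖ ^ 2 := by
  have hterm : ∀ i j, (‖(inner ℂ (e j) ((ContinuousLinearMap.adjoint A) (e i)) : ℂ)‖₊ : ℝ≥0∞) ^ 2
      = (‖(inner ℂ (e i) (A (e j)) : ℂ)‖₊ : ℝ≥0∞) ^ 2 := by
    intro i j
    have h1 : (inner ℂ (e j) ((ContinuousLinearMap.adjoint A) (e i)) : ℂ)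
        = inner ℂ (A (e j)) (e i) := ContinuousLinearMap.adjoint_inner_right A _ _
    have h2 : ‖(inner ℂ (A (e j)) (e i) : ℂ)‖ = ‖(inner ℂ (e i) (A (e j)) : ℂ)‖ :=
      norm_inner_symm _ _
    rw [h1]
    congr 1
    exact congrArg ENNReal.ofNNReal (NNReal.coe_injective (by simpa using h2))
  have key : ∑' i, (‖(ContinuousLinearMap.adjoint A) (e i)‖₊ : ℝ≥0∞) ^ 2
      = ∑' i, (‖A (e i)‖₊ : ℝ≥0∞) ^ 2 := by
    rw [my_double e (ContinuousLinearMap.adjoint A), my_double e A,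
      tsum_congr fun i => tsum_congr fun j => hterm i j]
    exact ENNReal.tsum_comm
  have hs : Summable (fun i => ‖(ContinuousLinearMap.adjoint A) (e i)‖ ^ 2) := by
    rw [my_summable_iff_ne_top, key, ← my_summable_iff_ne_top]
    exact hA
  refine ⟨hs, ?_⟩
  rw [my_tsum_sq_eq _ hs, my_tsum_sq_eq _ hA] at key
  exact (ENNReal.ofReal_eq_ofReal_iff (tsum_nonneg fun i => sq_nonneg _)
    (tsum_nonneg fun i => sq_nonneg _)).1 key

private lemma my_rpow (x : ℝ) : x ^ (2 : ℝ≥0∞).toReal = x ^ 2 := by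
  rw [ENNReal.toReal_ofNat, show ((2:ℝ)) = ((2:ℕ):ℝ) by norm_num, Real.rpow_natCast]

private lemma my_lp_norm (f : lp (fun _ : ι => H) 2) :
    ‖f‖ = Real.sqrt (∑' i, ‖f i‖ ^ 2) := by
  rw [lp.norm_eq_tsum_rpow (by norm_num) f, Real.sqrt_eq_rpow,
    tsum_congr fun i => my_rpow ‖f i‖]
  norm_num

private noncomputable def myF (v : ι → H) (hv : Summable fun i => ‖v i‖ ^ 2) :
    lp (fun _ : ι => H) 2 :=
  ⟨v, memℓp_gen ((summable_congr fun i => (my_rpow ‖v i‖).symm).1 hv)⟩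

private lemma myF_apply (v : ι → H) (hv : Summable fun i => ‖v i‖ ^ 2) (i : ι) :
    (myF v hv) i = v i := rfl

end Helpers

set_option maxHeartbeats 1000000 in
theorem stmt11 {ι : Type*} (e : HilbertBasis ι ℂ H) (A : H →L[ℂ] H)
    (hA : Summable fun i => ‖A (e i)‖ ^ 2)
    (ν : ℝ) (hν₀ : 0 ≤ ν) (hν₁ : ν ≤ 1) :
    Real.sqrt (2 * ν ^ 2 - 2 * ν + 1) * hsNorm e A ≤ wHS e ν A ∧
      wHS e ν A ≤ hsNorm e A := by
  obtain ⟨hAd, hAdsum⟩ := my_adjoint e A hA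
  set Ad := ContinuousLinearMap.adjoint A with hAddef
  set fA : lp (fun _ : ι => H) 2 := myF (fun i => A (e i)) hA with hfAdef
  set fAd : lp (fun _ : ι => H) 2 := myF (fun i => Ad (e i)) hAd with hfAddef
  have hnA : ‖fA‖ = hsNorm e A := by
    rw [hfAdef, my_lp_norm, hsNorm]
    have h1 : ∀ i, ‖(myF (fun i => A (e i)) hA) i‖ ^ 2 = ‖A (e i)‖ ^ 2 :=
      fun i => by rw [myF_apply]
    rw [tsum_congr h1]
  have hnAd : ‖fAd‖ = hsNorm e A := by
    rw [hfAddef, my_lp_norm, hsNorm]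
    have h1 : ∀ i, ‖(myF (fun i => Ad (e i)) hAd) i‖ ^ 2 = ‖Ad (e i)‖ ^ 2 :=
      fun i => by rw [myF_apply]
    rw [tsum_congr h1, hAdsum]
  -- the weighted part as an lp element
  have hw : ∀ θ : ℝ, hsNorm e (weightedPart ν θ A)
      = ‖((ν : ℂ) * Complex.exp (θ * Complex.I)) • fA
          + (((1 - ν : ℝ) : ℂ) * Complex.exp (-(θ * Complex.I))) • fAd‖ := by
    intro θ
    rw [my_lp_norm, hsNorm]
    congr 1
  have hcnorm : ∀ θ : ℝ, ‖(ν : ℂ) * Complex.exp (θ * Complex.I)‖ = ν := by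
    intro θ
    rw [norm_mul, Complex.norm_real, Real.norm_eq_abs,
      Complex.norm_exp_ofReal_mul_I, abs_of_nonneg hν₀, mul_one]
  have hcnorm' : ∀ θ : ℝ, ‖((1 - ν : ℝ) : ℂ) * Complex.exp (-(θ * Complex.I))‖ = 1 - ν := by
    intro θ
    have : -((θ : ℂ) * Complex.I) = ((-θ : ℝ) : ℂ) * Complex.I := by push_cast; ring
    rw [norm_mul, Complex.norm_real, Real.norm_eq_abs, this,
      Complex.norm_exp_ofReal_mul_I, abs_of_nonneg (by linarith), mul_one]
  -- upper bound pointwise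
  have hub : ∀ θ : ℝ, hsNorm e (weightedPart ν θ A) ≤ hsNorm e A := by
    intro θ
    rw [hw θ]
    calc ‖((ν : ℂ) * Complex.exp (θ * Complex.I)) • fA
          + (((1 - ν : ℝ) : ℂ) * Complex.exp (-(θ * Complex.I))) • fAd‖
        ≤ ‖((ν : ℂ) * Complex.exp (θ * Complex.I)) • fA‖
          + ‖(((1 - ν : ℝ) : ℂ) * Complex.exp (-(θ * Complex.I))) • fAd‖ := norm_add_le _ _
      _ = ν * hsNorm e A + (1 - ν) * hsNorm e A := by
          rw [norm_smul, norm_smul, hnA, hnAd, hcnorm, hcnorm']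
      _ = hsNorm e A := by ring
  have hbdd : BddAbove (Set.range fun θ : ℝ => hsNorm e (weightedPart ν θ A)) := by
    refine ⟨hsNorm e A, ?_⟩
    rintro _ ⟨θ, rfl⟩
    exact hub θ
  have hupper : wHS e ν A ≤ hsNorm e A := ciSup_le hub
  refine ⟨?_, hupper⟩
  -- lower bound
  set x : lp (fun _ : ι => H) 2 := (ν : ℂ) • fA with hxdef
  set y : lp (fun _ : ι => H) 2 := ((1 - ν : ℝ) : ℂ) • fAd with hydef
  have hx : ‖x‖ = ν * hsNorm e A := by
    rw [hxdef, norm_smul, hnA, Complex.norm_real, Real.norm_eq_abs, abs_of_nonneg hν₀]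
  have hy : ‖y‖ = (1 - ν) * hsNorm e A := by
    rw [hydef, norm_smul, hnAd, Complex.norm_real, Real.norm_eq_abs,
      abs_of_nonneg (by linarith)]
  have h0 : hsNorm e (weightedPart ν 0 A) = ‖x + y‖ := by
    rw [hw 0]
    congr 2 <;> simp [hxdef, hydef]
  have hpi2 : hsNorm e (weightedPart ν (Real.pi / 2) A) = ‖x - y‖ := by
    rw [hw (Real.pi / 2)]
    have he1 : Complex.exp (((Real.pi / 2 : ℝ) : ℂ) * Complex.I) = Complex.I := by
      rw [Complex.exp_mul_I]
      push_cast
      rw [Complex.cos_pi_div_two, Complex.sin_pi_div_two]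
      ring
    have he2 : Complex.exp (-(((Real.pi / 2 : ℝ) : ℂ) * Complex.I)) = -Complex.I := by
      rw [Complex.exp_neg, he1, Complex.inv_I]
    rw [he1, he2]
    have : ((ν : ℂ) * Complex.I) • fA + (((1 - ν : ℝ) : ℂ) * -Complex.I) • fAd
        = Complex.I • (x - y) := by
      rw [hxdef, hydef]
      module
    rw [this, norm_smul, Complex.norm_I, one_mul]
  have hl0 : hsNorm e (weightedPart ν 0 A) ≤ wHS e ν A := le_ciSup hbdd 0
  have hlpi : hsNorm e (weightedPart ν (Real.pi / 2) A) ≤ wHS e ν A :=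
    le_ciSup hbdd (Real.pi / 2)
  have hh0 : (0:ℝ) ≤ hsNorm e (weightedPart ν 0 A) := Real.sqrt_nonneg _
  have hW0 : 0 ≤ wHS e ν A := le_trans hh0 hl0
  have hh : (0:ℝ) ≤ hsNorm e A := Real.sqrt_nonneg _
  have hpar : ‖x + y‖ ^ 2 + ‖x - y‖ ^ 2 = 2 * (‖x‖ ^ 2 + ‖y‖ ^ 2) := by
    simpa [pow_two] using parallelogram_law_with_norm ℂ x y
  rw [hx, hy] at hpar
  have hxy : ‖x + y‖ ≤ wHS e ν A := h0 ▸ hl0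
  have hxy' : ‖x - y‖ ≤ wHS e ν A := hpi2 ▸ hlpi
  have p1 : ‖x + y‖ ^ 2 ≤ (wHS e ν A) ^ 2 := pow_le_pow_left₀ (norm_nonneg _) hxy 2
  have p2 : ‖x - y‖ ^ 2 ≤ (wHS e ν A) ^ 2 := pow_le_pow_left₀ (norm_nonneg _) hxy' 2
  have hsq : (2 * ν ^ 2 - 2 * ν + 1) * (hsNorm e A) ^ 2 ≤ (wHS e ν A) ^ 2 := by
    nlinarith [p1, p2, hpar]
  calc Real.sqrt (2 * ν ^ 2 - 2 * ν + 1) * hsNorm e A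
      = Real.sqrt ((2 * ν ^ 2 - 2 * ν + 1) * (hsNorm e A) ^ 2) := by
        rw [Real.sqrt_mul (by nlinarith) ((hsNorm e A) ^ 2), Real.sqrt_sq hh]
    _ ≤ Real.sqrt ((wHS e ν A) ^ 2) := Real.sqrt_le_sqrt hsq
    _ = wHS e ν A := Real.sqrt_sq hW0
end

section
/- Let H be a complex Hilbert space, let A be a Hilbert–Schmidt operator on H, and let 0 ≤ ν ≤ 1. Let T denote the block operator on H ⊕ H given by T = [[0, A],[A, 0]] (i.e., T(x, y) = (Ay, Ax)). Then w_{(2,ν)}(T) = √2 · w_{(2,ν)}(A). -/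
variable {H : Type*} [NormedAddCommGroup H] [InnerProductSpace ℂ H] [CompleteSpace H]

set_option linter.unusedSectionVars false
set_option linter.unusedVariables false

section Auxiliary

open scoped ComplexConjugate ENNReal
open ContinuousLinearMap (adjoint)

variable {E : Type*} [NormedAddCommGroup E] [InnerProductSpace ℂ E] [CompleteSpace E]

local notation "⟪" x ", " y "⟫" => @inner ℂ _ _ x y

lemma parseval {ι : Type*} (e : HilbertBasis ι ℂ E) (x : E) :
    HasSum (fun i => ‖⟪e i, x⟫‖ ^ 2) (‖x‖ ^ 2) := by
  have h := (e.hasSum_inner_mul_inner x x).mapL Complex.reCLM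
  have h2 : (fun i => Complex.reCLM (⟪x, e i⟫ * ⟪e i, x⟫)) = fun i => ‖⟪e i, x⟫‖ ^ 2 := by
    funext i
    rw [← inner_conj_symm x (e i), RCLike.conj_mul]
    simp
    norm_cast
  rw [h2] at h
  have h3 : Complex.reCLM ⟪x, x⟫ = ‖x‖ ^ 2 := by
    simpa using (inner_self_eq_norm_sq (𝕜 := ℂ) x)
  rwa [h3] at h

/-- HS sum in `ℝ≥0∞`. -/
noncomputable def hsE {ι : Type*} (e : HilbertBasis ι ℂ E) (A : E →L[ℂ] E) : ℝ≥0∞ :=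
  ∑' i, ENNReal.ofReal (‖A (e i)‖ ^ 2)

lemma parsevalE {ι : Type*} (e : HilbertBasis ι ℂ E) (x : E) :
    ENNReal.ofReal (‖x‖ ^ 2) = ∑' i, ENNReal.ofReal (‖⟪e i, x⟫‖ ^ 2) := by
  rw [← (parseval e x).tsum_eq]
  exact ENNReal.ofReal_tsum_of_nonneg (fun i => sq_nonneg _) (parseval e x).summable

lemma hsE_adjoint {ι κ : Type*} (e : HilbertBasis ι ℂ E) (f : HilbertBasis κ ℂ E)
    (A : E →L[ℂ] E) : hsE e A = hsE f (adjoint A) := by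
  unfold hsE
  calc ∑' i, ENNReal.ofReal (‖A (e i)‖ ^ 2)
      = ∑' i, ∑' j, ENNReal.ofReal (‖⟪f j, A (e i)⟫‖ ^ 2) := by
        exact tsum_congr fun i => parsevalE f (A (e i))
    _ = ∑' j, ∑' i, ENNReal.ofReal (‖⟪e i, adjoint A (f j)⟫‖ ^ 2) := by
        rw [ENNReal.tsum_comm]
        refine tsum_congr fun j => tsum_congr fun i => ?_
        rw [← ContinuousLinearMap.adjoint_inner_left, norm_inner_symm]
    _ = ∑' j, ENNReal.ofReal (‖adjoint A (f j)‖ ^ 2) := by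
        exact tsum_congr fun j => (parsevalE e (adjoint A (f j))).symm

lemma hsE_basis_indep {ι κ : Type*} (e : HilbertBasis ι ℂ E) (f : HilbertBasis κ ℂ E)
    (A : E →L[ℂ] E) : hsE e A = hsE f A := by
  rw [hsE_adjoint e f A, hsE_adjoint f f (adjoint A), ContinuousLinearMap.adjoint_adjoint]

lemma tsum_sq_eq_toReal {ι : Type*} (e : HilbertBasis ι ℂ E) (A : E →L[ℂ] E) :
    ∑' i, ‖A (e i)‖ ^ 2 = (hsE e A).toReal := by
  by_cases h : Summable fun i => ‖A (e i)‖ ^ 2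
  · rw [hsE, ← ENNReal.ofReal_tsum_of_nonneg (fun i => sq_nonneg _) h,
      ENNReal.toReal_ofReal (tsum_nonneg fun i => sq_nonneg _)]
  · rw [tsum_eq_zero_of_not_summable h]
    have hne : hsE e A = ⊤ := by
      by_contra hne
      have := ENNReal.summable_toReal hne
      simp only [ENNReal.toReal_ofReal (sq_nonneg _)] at this
      exact h this
    rw [hne, ENNReal.toReal_top]

lemma hsNorm_eq {ι : Type*} (e : HilbertBasis ι ℂ E) (A : E →L[ℂ] E) :
    hsNorm e A = Real.sqrt (hsE e A).toReal := by
  rw [hsNorm, tsum_sq_eq_toReal]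

lemma blockOp_apply (X Y Z W : H →L[ℂ] H) (v : WithLp 2 (H × H)) :
    blockOp X Y Z W v = (WithLp.equiv 2 (H × H)).symm (X v.fst + Y v.snd, Z v.fst + W v.snd) := by
  simp [blockOp]

lemma adjoint_blockOp (A : H →L[ℂ] H) :
    adjoint (blockOp 0 A A 0) = blockOp 0 (adjoint A) (adjoint A) 0 := by
  symm
  rw [ContinuousLinearMap.eq_adjoint_iff]
  intro x y
  simp [blockOp_apply, WithLp.prod_inner_apply, ContinuousLinearMap.adjoint_inner_left]
  ring

lemma weightedPart_blockOp (ν θ : ℝ) (A : H →L[ℂ] H) :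
    weightedPart ν θ (blockOp 0 A A 0) = blockOp 0 (weightedPart ν θ A) (weightedPart ν θ A) 0 := by
  unfold weightedPart
  rw [adjoint_blockOp]
  ext v <;>
  simp [blockOp_apply, ← WithLp.toLp_smul, ← WithLp.toLp_add, Prod.smul_mk,
    Prod.mk_add_mk]

lemma tsum_sum_type {ι κ : Type*} (g : ι ⊕ κ → ℝ≥0∞) :
    ∑' x, g x = ∑' i, g (Sum.inl i) + ∑' j, g (Sum.inr j) := by
  have h1 : HasSum (g ∘ (↑) : (Set.range (Sum.inl : ι → ι ⊕ κ)) → ℝ≥0∞)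
      (∑' i, g (Sum.inl i)) := by
    have := (ENNReal.summable (f := fun i => g (Sum.inl i))).hasSum
    exact (Equiv.hasSum_iff (Equiv.ofInjective Sum.inl Sum.inl_injective)).mp this
  have h2 : HasSum (g ∘ (↑) : (Set.range (Sum.inr : κ → ι ⊕ κ)) → ℝ≥0∞)
      (∑' j, g (Sum.inr j)) := by
    have := (ENNReal.summable (f := fun j => g (Sum.inr j))).hasSum
    exact (Equiv.hasSum_iff (Equiv.ofInjective Sum.inr Sum.inr_injective)).mp this
  exact (h1.add_isCompl Set.isCompl_range_inl_range_inr h2).tsum_eq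

/-- The HilbertBasis of `H ⊕₂ H` built from one of `H`. -/
noncomputable def prodBasis {ι : Type*} (e : HilbertBasis ι ℂ H) :
    HilbertBasis (ι ⊕ ι) ℂ (WithLp 2 (H × H)) :=
  HilbertBasis.mkOfOrthogonalEqBot
    (v := Sum.elim (fun i => (WithLp.equiv 2 (H × H)).symm (e i, 0))
      (fun i => (WithLp.equiv 2 (H × H)).symm (0, e i)))
    (by
      classical
      rw [orthonormal_iff_ite]
      have he := orthonormal_iff_ite.mp e.orthonormal
      rintro (i | i) (j | j) <;>
        simp only [Sum.elim_inl, Sum.elim_inr, WithLp.prod_inner_apply,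
          WithLp.equiv_symm_apply, WithLp.ofLp_toLp, inner_zero_left, inner_zero_right,
          add_zero, zero_add, Sum.inl.injEq, Sum.inr.injEq, he i j,
          reduceCtorEq, if_false])
    (by
      rw [Submodule.eq_bot_iff]
      intro x hx
      have key : ∀ u, (∀ i : ι, ⟪e i, u⟫ = 0) → u = 0 := by
        intro u hu
        have : e.repr u = 0 := by
          ext i
          simpa [e.repr_apply_apply] using hu i
        simpa using congrArg e.repr.symm this
      have h1 : x.fst = 0 := by
        apply key
        intro i
        have := hx _ (Submodule.subset_span (Set.mem_range_self (Sum.inl i)))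
        simpa [WithLp.prod_inner_apply] using this
      have h2 : x.snd = 0 := by
        apply key
        intro i
        have := hx _ (Submodule.subset_span (Set.mem_range_self (Sum.inr i)))
        simpa [WithLp.prod_inner_apply] using this
      apply (WithLp.equiv 2 (H × H)).injective
      exact Prod.ext h1 h2)

lemma hsE_blockOp {ι : Type*} (e : HilbertBasis ι ℂ H) (B : H →L[ℂ] H) :
    hsE (prodBasis e) (blockOp 0 B B 0) = hsE e B + hsE e B := by
  unfold hsE
  have hco : ⇑(prodBasis e) = Sum.elim (fun i => (WithLp.equiv 2 (H × H)).symm (e i, 0))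
      (fun i => (WithLp.equiv 2 (H × H)).symm (0, e i)) :=
    HilbertBasis.coe_mkOfOrthogonalEqBot _ _
  rw [hco, tsum_sum_type]
  congr 1 <;> refine tsum_congr fun i => ?_ <;>
    simp [blockOp_apply, WithLp.prod_norm_sq_eq_of_L2]

lemma sqrt_toReal_double (x : ℝ≥0∞) :
    Real.sqrt ((x + x).toReal) = Real.sqrt 2 * Real.sqrt x.toReal := by
  by_cases h : x = ⊤
  · simp [h]
  · rw [ENNReal.toReal_add h h, ← two_mul, Real.sqrt_mul (by norm_num)]

end Auxiliary

theorem stmt13 {ι κ : Type*} (e : HilbertBasis ι ℂ H)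
    (f : HilbertBasis κ ℂ (WithLp 2 (H × H)))
    (A : H →L[ℂ] H) (hA : Summable fun i => ‖A (e i)‖ ^ 2)
    (ν : ℝ) (hν₀ : 0 ≤ ν) (hν₁ : ν ≤ 1) :
    wHS f ν (blockOp 0 A A 0) = Real.sqrt 2 * wHS e ν A := by
  unfold wHS
  have hpt : ∀ θ : ℝ, hsNorm f (weightedPart ν θ (blockOp 0 A A 0)) =
      Real.sqrt 2 * hsNorm e (weightedPart ν θ A) := by
    intro θ
    rw [hsNorm_eq, hsNorm_eq, weightedPart_blockOp,
      hsE_basis_indep f (prodBasis e) _, hsE_blockOp, sqrt_toReal_double]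
  simp only [hpt]
  exact (Real.mul_iSup_of_nonneg (Real.sqrt_nonneg 2) _).symm
end
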